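/- Let A be an n-by-n nonsingular Hermitian matrix and let 𝒳 be the eigenspace associated with an eigenvalue λ of A. Then for any nonzero subspace 𝒴 of ℂ^n, |λ/λ_max| · sin∠(𝒳, A𝒴) ≤ sin∠(𝒳, 𝒴) ≤ |λ/λ_min| · sin∠(𝒳, A𝒴), where λ_min and λ_max are the smallest and largest magnitude eigenvalues of A, respectively, and A𝒴 = {Ay : y ∈ 𝒴}. -/

import Mathlib

open Matrix

noncomputable def hnorm {n : ℕ} (x : Fin n → ℂ) : ℝ :=
  Real.sqrt ((star x ⬝ᵥ x).re)

noncomputable def cosAngle {n : ℕ} (x y : Fin n → ℂ) : ℝ :=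
  ‖star x ⬝ᵥ y‖ / (hnorm x * hnorm y)

noncomputable def sinAngle {n : ℕ} (x y : Fin n → ℂ) : ℝ :=
  Real.sqrt (1 - cosAngle x y ^ 2)

noncomputable def sinAngleSub {n : ℕ} (x : Fin n → ℂ) (K : Submodule ℂ (Fin n → ℂ)) : ℝ :=
  sInf {s : ℝ | ∃ y ∈ K, y ≠ 0 ∧ s = sinAngle x y}

noncomputable def sinAngleSubSub {n : ℕ} (X K : Submodule ℂ (Fin n → ℂ)) : ℝ :=
  sInf {s : ℝ | ∃ x ∈ X, x ≠ 0 ∧ ∃ y ∈ K, y ≠ 0 ∧ s = sinAngle x y}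

def Eigenpair {n : ℕ} (A : Matrix (Fin n) (Fin n) ℂ) (μ : ℂ) (v : Fin n → ℂ) : Prop :=
  v ≠ 0 ∧ A *ᵥ v = μ • v

noncomputable def specNorm {n : ℕ} (M : Matrix (Fin n) (Fin n) ℂ) : ℝ :=
  sSup {r : ℝ | ∃ v : Fin n → ℂ, hnorm v = 1 ∧ r = hnorm (M *ᵥ v)}

noncomputable def frobNorm {m p : ℕ} (M : Matrix (Fin m) (Fin p) ℂ) : ℝ :=
  Real.sqrt (∑ i, ∑ j, ‖M i j‖ ^ 2)

noncomputable def specCond {n : ℕ} (M : Matrix (Fin n) (Fin n) ℂ) : ℝ :=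
  sSup {r : ℝ | ∃ μ ∈ spectrum ℂ M, r = ‖μ‖} /
    sInf {r : ℝ | ∃ μ ∈ spectrum ℂ M, r = ‖μ‖}

def RitzPair {n : ℕ} (A : Matrix (Fin n) (Fin n) ℂ) (K : Submodule ℂ (Fin n → ℂ))
    (μ : ℂ) (u : Fin n → ℂ) : Prop :=
  u ∈ K ∧ u ≠ 0 ∧ ∀ y ∈ K, star y ⬝ᵥ (A *ᵥ u - μ • u) = 0

def HarmonicRitzPair {n : ℕ} (A : Matrix (Fin n) (Fin n) ℂ) (σ : ℂ)
    (K : Submodule ℂ (Fin n → ℂ)) (θ : ℂ) (v : Fin n → ℂ) : Prop :=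
  v ∈ K ∧ v ≠ 0 ∧ ∀ y ∈ K, star ((A - σ • 1) *ᵥ y) ⬝ᵥ (A *ᵥ v - θ • v) = 0

def THarmonicRitzPair {n : ℕ} (A T : Matrix (Fin n) (Fin n) ℂ) (σ : ℂ)
    (K : Submodule ℂ (Fin n → ℂ)) (θ : ℂ) (v : Fin n → ℂ) : Prop :=
  v ∈ K ∧ v ≠ 0 ∧ ∀ y ∈ K, star ((A - σ • 1) *ᵥ y) ⬝ᵥ (T *ᵥ (A *ᵥ v - θ • v)) = 0

def IsOrthProjOn {n : ℕ} (P : Matrix (Fin n) (Fin n) ℂ)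
    (Q : Submodule ℂ (Fin n → ℂ)) : Prop :=
  P.IsHermitian ∧ P * P = P ∧ (∀ v, P *ᵥ v ∈ Q) ∧ (∀ v ∈ Q, P *ᵥ v = v)


noncomputable def toE {n : ℕ} (x : Fin n → ℂ) : EuclideanSpace ℂ (Fin n) :=
  (WithLp.equiv 2 _).symm x

lemma dot_eq_inner {n : ℕ} (x y : Fin n → ℂ) :
    star x ⬝ᵥ y = inner ℂ (toE x) (toE y) :=
  dotProduct_comm _ _

lemma hnorm_eq {n : ℕ} (x : Fin n → ℂ) : hnorm x = ‖toE x‖ := by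
  rw [hnorm, dot_eq_inner, @norm_eq_sqrt_re_inner ℂ]
  rfl

lemma dot_herm {n : ℕ} {A : Matrix (Fin n) (Fin n) ℂ} (hA : A.IsHermitian) (x w : Fin n → ℂ) :
    star x ⬝ᵥ (A *ᵥ w) = star (A *ᵥ x) ⬝ᵥ w := by
  rw [Matrix.dotProduct_mulVec, Matrix.star_mulVec, hA.eq]

lemma repr_mulVec {n : ℕ} {A : Matrix (Fin n) (Fin n) ℂ} (hA : A.IsHermitian)
    (v : Fin n → ℂ) (j : Fin n) :
    hA.eigenvectorBasis.repr (toE (A *ᵥ v)) j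
      = (hA.eigenvalues j : ℂ) * hA.eigenvectorBasis.repr (toE v) j := by
  rw [OrthonormalBasis.repr_apply_apply, OrthonormalBasis.repr_apply_apply]
  have h1 : (hA.eigenvectorBasis j : EuclideanSpace ℂ (Fin n)) = toE (⇑(hA.eigenvectorBasis j)) := rfl
  rw [h1, ← dot_eq_inner, ← dot_eq_inner, dot_herm hA, hA.mulVec_eigenvectorBasis]
  have : star ((hA.eigenvalues j) • ⇑(hA.eigenvectorBasis j))
      = ((hA.eigenvalues j : ℂ)) • star (⇑(hA.eigenvectorBasis j)) := by
    ext i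
    simp [Pi.smul_apply, Complex.real_smul, _root_.map_mul]
  rw [this, smul_dotProduct]
  rfl

lemma hnorm_sq_repr {n : ℕ} (v : Fin n → ℂ) (b : OrthonormalBasis (Fin n) ℂ (EuclideanSpace ℂ (Fin n))) :
    hnorm v ^ 2 = ∑ j, ‖b.repr (toE v) j‖ ^ 2 := by
  rw [hnorm_eq, ← b.repr.norm_map (toE v), EuclideanSpace.norm_eq,
    Real.sq_sqrt (by positivity)]

lemma mulVec_hnorm_bounds {n : ℕ} {A : Matrix (Fin n) (Fin n) ℂ} (hA : A.IsHermitian)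
    {m M : ℝ} (hm0 : 0 ≤ m) (hM0 : 0 ≤ M)
    (hm : ∀ i, m ≤ |hA.eigenvalues i|) (hM : ∀ i, |hA.eigenvalues i| ≤ M) (v : Fin n → ℂ) :
    m * hnorm v ≤ hnorm (A *ᵥ v) ∧ hnorm (A *ᵥ v) ≤ M * hnorm v := by
  set b := hA.eigenvectorBasis with hb
  have h1 : hnorm v ^ 2 = ∑ j, ‖b.repr (toE v) j‖ ^ 2 := hnorm_sq_repr v b
  have h2 : hnorm (A *ᵥ v) ^ 2 = ∑ j, (|hA.eigenvalues j| * ‖b.repr (toE v) j‖) ^ 2 := by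
    rw [hnorm_sq_repr (A *ᵥ v) b]
    refine Finset.sum_congr rfl fun j _ => ?_
    rw [repr_mulVec hA v j]
    simp [mul_pow, abs_pow, sq_abs, Complex.norm_real, Real.norm_eq_abs]
    exact Or.inl rfl
  have hlow : (m * hnorm v) ^ 2 ≤ hnorm (A *ᵥ v) ^ 2 := by
    rw [mul_pow, h1, h2, Finset.mul_sum]
    refine Finset.sum_le_sum fun j _ => ?_
    rw [mul_pow]
    exact mul_le_mul_of_nonneg_right (pow_le_pow_left₀ hm0 (hm j) 2) (by positivity)
  have hup : hnorm (A *ᵥ v) ^ 2 ≤ (M * hnorm v) ^ 2 := by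
    rw [mul_pow, h1, h2, Finset.mul_sum]
    refine Finset.sum_le_sum fun j _ => ?_
    rw [mul_pow]
    exact mul_le_mul_of_nonneg_right (pow_le_pow_left₀ (abs_nonneg _) (hM j) 2) (by positivity)
  have hnv : 0 ≤ hnorm v := Real.sqrt_nonneg _
  have hnAv : 0 ≤ hnorm (A *ᵥ v) := Real.sqrt_nonneg _
  constructor
  · have := Real.sqrt_le_sqrt hlow
    rwa [Real.sqrt_sq (by positivity), Real.sqrt_sq hnAv] at this
  · have := Real.sqrt_le_sqrt hup
    rwa [Real.sqrt_sq hnAv, Real.sqrt_sq (by positivity)] at this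

lemma toE_ne {n : ℕ} (x : Fin n → ℂ) (hx : x ≠ 0) : toE x ≠ 0 := by
  simpa [toE] using hx

lemma hnorm_pos {n : ℕ} (x : Fin n → ℂ) (hx : x ≠ 0) : 0 < hnorm x := by
  rw [hnorm_eq]; exact norm_pos_iff.mpr (toE_ne x hx)

lemma sinAngle_formula {n : ℕ} (x w : Fin n → ℂ) (α : ℂ) (hx : x ≠ 0)
    (hw : star x ⬝ᵥ w = 0) (hy : α • x + w ≠ 0) :
    sinAngle x (α • x + w) = hnorm w / hnorm (α • x + w) := by
  have hXW : (inner ℂ (toE x) (toE w) : ℂ) = 0 := by rw [← dot_eq_inner]; exact hw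
  have hYE : toE (α • x + w) = α • toE x + toE w := rfl
  have hX0 : (0:ℝ) < hnorm x := hnorm_pos x hx
  have hY0 : (0:ℝ) < hnorm (α • x + w) := hnorm_pos _ hy
  have hdot : star x ⬝ᵥ (α • x + w) = α * ((hnorm x : ℝ)^2 : ℂ) := by
    rw [dot_eq_inner, hYE, inner_add_right, inner_smul_right, hXW, add_zero,
      @inner_self_eq_norm_sq_to_K ℂ, hnorm_eq]
    norm_num
  have hnwnn : (0:ℝ) ≤ hnorm w := Real.sqrt_nonneg _
  have habs : ‖star x ⬝ᵥ (α • x + w)‖ = ‖α‖ * hnorm x ^ 2 := by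
    rw [hdot]
    simp [norm_mul, norm_pow, Complex.norm_real, abs_of_nonneg hX0.le]
  have hYsq : hnorm (α • x + w) ^ 2 = ‖α‖ ^ 2 * hnorm x ^ 2 + hnorm w ^ 2 := by
    rw [hnorm_eq, hYE, @norm_add_sq ℂ, inner_smul_left, hXW, mul_zero, map_zero,
      norm_smul, hnorm_eq, hnorm_eq]
    simp [mul_pow]
  have hcos : cosAngle x (α • x + w) ^ 2
      = ‖α‖ ^ 2 * hnorm x ^ 2 / hnorm (α • x + w) ^ 2 := by
    rw [cosAngle, habs]
    field_simp
  have h1 : 1 - cosAngle x (α • x + w) ^ 2 = hnorm w ^ 2 / hnorm (α • x + w) ^ 2 := by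
    rw [hcos, eq_div_iff (by positivity), sub_mul, one_mul,
      div_mul_cancel₀ _ (by positivity : hnorm (α • x + w) ^ 2 ≠ 0)]
    linarith [hYsq]
  rw [sinAngle, h1, Real.sqrt_div (sq_nonneg _), Real.sqrt_sq hnwnn, Real.sqrt_sq hY0.le]

lemma hnorm_decomp {n : ℕ} (x w : Fin n → ℂ) (α : ℂ) (hw : star x ⬝ᵥ w = 0) :
    hnorm (α • x + w) ^ 2 = ‖α‖ ^ 2 * hnorm x ^ 2 + hnorm w ^ 2 := by
  have hXW : (inner ℂ (toE x) (toE w) : ℂ) = 0 := by rw [← dot_eq_inner]; exact hw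
  have hYE : toE (α • x + w) = α • toE x + toE w := rfl
  rw [hnorm_eq, hYE, @norm_add_sq ℂ, inner_smul_left, hXW, mul_zero, map_zero,
    norm_smul, hnorm_eq, hnorm_eq]
  simp [mul_pow]

lemma hnorm_nonneg {n : ℕ} (x : Fin n → ℂ) : 0 ≤ hnorm x := Real.sqrt_nonneg _

lemma sinAngle_nonneg {n : ℕ} (x y : Fin n → ℂ) : 0 ≤ sinAngle x y := Real.sqrt_nonneg _

lemma real_key (m M L aa P b c B C : ℝ) (hm0 : 0 < m) (hml : m ≤ L) (hlM : L ≤ M)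
    (hbnn : 0 ≤ b) (hcnn : 0 ≤ c) (hPnn : 0 ≤ P) (haann : 0 ≤ aa)
    (hBpos : 0 < B) (hCpos : 0 < C)
    (hBsq : B ^ 2 = aa ^ 2 * P ^ 2 + b ^ 2) (hCsq : C ^ 2 = L ^ 2 * aa ^ 2 * P ^ 2 + c ^ 2)
    (hclow : m * b ≤ c) (hcup : c ≤ M * b) :
    (L * c) / (M * C) ≤ b / B ∧ b / B ≤ (L * c) / (m * C) := by
  have hLpos : 0 < L := lt_of_lt_of_le hm0 hml
  have hMpos : 0 < M := lt_of_lt_of_le hLpos hlM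
  have hc2low : m ^ 2 * b ^ 2 ≤ c ^ 2 := by
    have := mul_self_le_mul_self (by positivity) hclow
    nlinarith [this]
  have hc2up : c ^ 2 ≤ M ^ 2 * b ^ 2 := by
    have := mul_self_le_mul_self hcnn hcup
    nlinarith [this]
  constructor
  · have hsq : ((L * c) / (M * C)) ^ 2 ≤ (b / B) ^ 2 := by
      rw [div_pow, div_pow, div_le_div_iff₀ (by positivity) (by positivity)]
      nlinarith [mul_le_mul_of_nonneg_left hc2up (by positivity : (0:ℝ) ≤ L ^ 2 * aa ^ 2 * P ^ 2),
        mul_le_mul_of_nonneg_right (by nlinarith : L ^ 2 ≤ M ^ 2)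
          (by positivity : (0:ℝ) ≤ c ^ 2 * b ^ 2)]
    have := Real.sqrt_le_sqrt hsq
    rwa [Real.sqrt_sq (by positivity), Real.sqrt_sq (by positivity)] at this
  · have hsq : (b / B) ^ 2 ≤ ((L * c) / (m * C)) ^ 2 := by
      rw [div_pow, div_pow, div_le_div_iff₀ (by positivity) (by positivity)]
      nlinarith [mul_le_mul_of_nonneg_left hc2low (by positivity : (0:ℝ) ≤ L ^ 2 * aa ^ 2 * P ^ 2),
        mul_le_mul_of_nonneg_right (by nlinarith : m ^ 2 ≤ L ^ 2)
          (by positivity : (0:ℝ) ≤ c ^ 2 * b ^ 2)]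
    have := Real.sqrt_le_sqrt hsq
    rwa [Real.sqrt_sq (by positivity), Real.sqrt_sq (by positivity)] at this

lemma pairwise_bound {n : ℕ} {A : Matrix (Fin n) (Fin n) ℂ} (hA : A.IsHermitian)
    {m M : ℝ} (hm0 : 0 < m)
    (hlow : ∀ v, m * hnorm v ≤ hnorm (A *ᵥ v)) (hup : ∀ v, hnorm (A *ᵥ v) ≤ M * hnorm v)
    {l : ℂ} (hml : m ≤ ‖l‖) (hlM : ‖l‖ ≤ M)
    {x : Fin n → ℂ} (hx : x ≠ 0) (hxe : A *ᵥ x = l • x)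
    {y : Fin n → ℂ} (hy : y ≠ 0) (hAy : A *ᵥ y ≠ 0) :
    (‖l‖ / M) * sinAngle x (A *ᵥ y) ≤ sinAngle x y ∧
      sinAngle x y ≤ (‖l‖ / m) * sinAngle x (A *ᵥ y) := by
  have hxx0 : star x ⬝ᵥ x ≠ 0 := by
    rw [dot_eq_inner]
    exact inner_self_ne_zero.mpr (toE_ne x hx)
  set α := (star x ⬝ᵥ y) / (star x ⬝ᵥ x) with hα
  set w := y - α • x with hwdef
  have hyw : y = α • x + w := by rw [hwdef]; abel
  have hw : star x ⬝ᵥ w = 0 := by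
    rw [hwdef, dotProduct_sub, dotProduct_smul, hα, smul_eq_mul,
      div_mul_cancel₀ _ hxx0, sub_self]
  have hAw : star x ⬝ᵥ (A *ᵥ w) = 0 := by
    rw [dot_herm hA, hxe, star_smul, smul_dotProduct, hw, smul_zero]
  have hAyw : A *ᵥ y = (l * α) • x + A *ᵥ w := by
    conv_lhs => rw [hyw]
    rw [Matrix.mulVec_add, Matrix.mulVec_smul, hxe, smul_smul, mul_comm α l]
  have hs1 : sinAngle x y = hnorm w / hnorm y := by
    conv_lhs => rw [hyw]
    conv_rhs => rw [hyw]
    exact sinAngle_formula x w α hx hw (hyw ▸ hy)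
  have hs2 : sinAngle x (A *ᵥ y) = hnorm (A *ᵥ w) / hnorm (A *ᵥ y) := by
    conv_lhs => rw [hAyw]
    conv_rhs => rw [hAyw]
    exact sinAngle_formula x (A *ᵥ w) (l * α) hx hAw (hAyw ▸ hAy)
  set L := ‖l‖ with hL
  set b := hnorm w with hb
  set c := hnorm (A *ᵥ w) with hc
  set B := hnorm y with hB0
  set C := hnorm (A *ᵥ y) with hC0
  set P := hnorm x with hP
  set aa := ‖α‖ with haa
  have hBsq : B ^ 2 = aa ^ 2 * P ^ 2 + b ^ 2 := by
    rw [hB0]; conv_lhs => rw [hyw]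
    exact hnorm_decomp x w α hw
  have hCsq : C ^ 2 = L ^ 2 * aa ^ 2 * P ^ 2 + c ^ 2 := by
    rw [hC0]; conv_lhs => rw [hAyw]
    rw [hnorm_decomp x (A *ᵥ w) (l * α) hAw]
    rw [norm_mul]
    ring
  have key := real_key m M L aa P b c B C hm0 hml hlM (hnorm_nonneg _) (hnorm_nonneg _)
    (hnorm_nonneg _) (norm_nonneg _) (hnorm_pos y hy) (hnorm_pos _ hAy)
    hBsq hCsq (hlow w) (hup w)
  rw [hs1, hs2]
  constructor
  · calc L / M * (c / C) = (L * c) / (M * C) := by rw [div_mul_div_comm]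
      _ ≤ b / B := key.1
  · calc b / B ≤ (L * c) / (m * C) := key.2
      _ = L / m * (c / C) := by rw [div_mul_div_comm]

/-- Corollary 4.2 (two-sided sine bound between an eigenspace and a subspace). -/
theorem stmt5_sin_two_sided_subspace_bound
    {n : ℕ} (A : Matrix (Fin n) (Fin n) ℂ) (hA : A.IsHermitian) (hdet : IsUnit A.det)
    (l : ℂ) (X : Submodule ℂ (Fin n → ℂ))
    (hX : ∀ w, w ∈ X ↔ A *ᵥ w = l • w) (hXne : X ≠ ⊥)
    (lmin lmax : ℂ) (xmin xmax : Fin n → ℂ)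
    (hmin : Eigenpair A lmin xmin) (hmax : Eigenpair A lmax xmax)
    (hminLe : ∀ μ v, Eigenpair A μ v → ‖lmin‖ ≤ ‖μ‖)
    (hmaxGe : ∀ μ v, Eigenpair A μ v → ‖μ‖ ≤ ‖lmax‖)
    (Y : Submodule ℂ (Fin n → ℂ)) (hY : Y ≠ ⊥) :
    ‖l / lmax‖ * sinAngleSubSub X (Y.map (Matrix.mulVecLin A)) ≤
        sinAngleSubSub X Y ∧
      sinAngleSubSub X Y ≤
        ‖l / lmin‖ * sinAngleSubSub X (Y.map (Matrix.mulVecLin A)) := by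
  have hinj : Function.Injective (A.mulVec) :=
    Matrix.mulVec_injective_iff_isUnit.mpr ((Matrix.isUnit_iff_isUnit_det A).mpr hdet)
  have hAne : ∀ v : Fin n → ℂ, v ≠ 0 → A *ᵥ v ≠ 0 := by
    intro v hv h
    exact hv (hinj (h.trans (Matrix.mulVec_zero A).symm))
  set m := ‖lmin‖ with hmdef
  set M := ‖lmax‖ with hMdef
  have hm0 : 0 < m := by
    have hlmin : lmin ≠ 0 := by
      intro h
      exact hAne xmin hmin.1 (by rw [hmin.2, h, zero_smul])
    exact norm_pos_iff.mpr hlmin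
  obtain ⟨x₀, hx₀X, hx₀⟩ := Submodule.exists_mem_ne_zero_of_ne_bot hXne
  obtain ⟨y₀, hy₀Y, hy₀⟩ := Submodule.exists_mem_ne_zero_of_ne_bot hY
  have hx₀e : A *ᵥ x₀ = l • x₀ := (hX x₀).1 hx₀X
  have hml : m ≤ ‖l‖ := hminLe l x₀ ⟨hx₀, hx₀e⟩
  have hlM : ‖l‖ ≤ M := hmaxGe l x₀ ⟨hx₀, hx₀e⟩
  have heig : ∀ i, Eigenpair A ((hA.eigenvalues i : ℂ)) ⇑(hA.eigenvectorBasis i) := by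
    intro i
    constructor
    · have := hA.eigenvectorBasis.orthonormal.ne_zero i
      intro h
      apply this
      ext j
      exact congrFun h j
    · rw [hA.mulVec_eigenvectorBasis]
      ext j
      simp [Pi.smul_apply, Complex.real_smul]
  have hmEV : ∀ i, m ≤ |hA.eigenvalues i| := fun i => by
    simpa [Complex.norm_real] using hminLe _ _ (heig i)
  have hMEV : ∀ i, |hA.eigenvalues i| ≤ M := fun i => by
    simpa [Complex.norm_real] using hmaxGe _ _ (heig i)
  have hlow : ∀ v, m * hnorm v ≤ hnorm (A *ᵥ v) := fun v =>
    (mulVec_hnorm_bounds hA hm0.le (le_trans hm0.le (le_trans hml hlM)) hmEV hMEV v).1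
  have hup : ∀ v, hnorm (A *ᵥ v) ≤ M * hnorm v := fun v =>
    (mulVec_hnorm_bounds hA hm0.le (le_trans hm0.le (le_trans hml hlM)) hmEV hMEV v).2
  set L := ‖l‖ with hLdef
  have hLpos : 0 < L := lt_of_lt_of_le hm0 hml
  have hMpos : 0 < M := lt_of_lt_of_le hLpos hlM
  set S := {s : ℝ | ∃ x ∈ X, x ≠ 0 ∧ ∃ y ∈ Y, y ≠ 0 ∧ s = sinAngle x y} with hSdef
  set S' := {s : ℝ | ∃ x ∈ X, x ≠ 0 ∧ ∃ y ∈ Y.map (Matrix.mulVecLin A), y ≠ 0 ∧ s = sinAngle x y}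
    with hS'def
  have hSS : sinAngleSubSub X Y = sInf S := rfl
  have hSS' : sinAngleSubSub X (Y.map (Matrix.mulVecLin A)) = sInf S' := rfl
  have hSne : S.Nonempty := ⟨sinAngle x₀ y₀, x₀, hx₀X, hx₀, y₀, hy₀Y, hy₀, rfl⟩
  have hS'ne : S'.Nonempty := by
    refine ⟨sinAngle x₀ (A *ᵥ y₀), x₀, hx₀X, hx₀, A *ᵥ y₀, ?_, hAne y₀ hy₀, rfl⟩
    exact ⟨y₀, hy₀Y, Matrix.mulVecLin_apply A y₀⟩
  have hSbdd : BddBelow S := by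
    refine ⟨0, fun s hs => ?_⟩
    obtain ⟨x, _, _, y, _, _, rfl⟩ := hs
    exact sinAngle_nonneg x y
  have hS'bdd : BddBelow S' := by
    refine ⟨0, fun s hs => ?_⟩
    obtain ⟨x, _, _, y, _, _, rfl⟩ := hs
    exact sinAngle_nonneg x y
  have hS'nonneg : 0 ≤ sInf S' := le_csInf hS'ne (by
    rintro s ⟨x, _, _, y, _, _, rfl⟩
    exact sinAngle_nonneg x y)
  have habsmax : ‖l / lmax‖ = L / M := by rw [norm_div]
  have habsmin : ‖l / lmin‖ = L / m := by rw [norm_div]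
  constructor
  · rw [habsmax, hSS, hSS']
    apply le_csInf hSne
    rintro s ⟨x, hxX, hx, y, hyY, hy, rfl⟩
    have hp := (pairwise_bound hA hm0 hlow hup hml hlM hx ((hX x).1 hxX) hy (hAne y hy)).1
    have hmem : sinAngle x (A *ᵥ y) ∈ S' :=
      ⟨x, hxX, hx, A *ᵥ y, ⟨y, hyY, Matrix.mulVecLin_apply A y⟩, hAne y hy, rfl⟩
    calc L / M * sInf S' ≤ L / M * sinAngle x (A *ᵥ y) :=
          mul_le_mul_of_nonneg_left (csInf_le hS'bdd hmem) (by positivity)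
      _ ≤ sinAngle x y := hp
  · rw [habsmin, hSS, hSS']
    have hk : 0 < L / m := by positivity
    rw [← div_le_iff₀' hk]
    apply le_csInf hS'ne
    rintro s ⟨x, hxX, hx, z, hzmap, hz, rfl⟩
    obtain ⟨y, hyY, hyz⟩ := hzmap
    rw [Matrix.mulVecLin_apply] at hyz
    have hy : y ≠ 0 := by
      intro h
      apply hz
      rw [← hyz, h, Matrix.mulVec_zero]
    have hp := (pairwise_bound hA hm0 hlow hup hml hlM hx ((hX x).1 hxX) hy (hAne y hy)).2
    rw [hyz] at hp
    have hmem : sinAngle x y ∈ S := ⟨x, hxX, hx, y, hyY, hy, rfl⟩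
    rw [div_le_iff₀' hk]
    calc sInf S ≤ sinAngle x y := csInf_le hSbdd hmem
      _ ≤ L / m * sinAngle x z := hp
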